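/- Let p be a prime and G a finite group such that G = ⟨g, H⟩, where g has order dividing p−1 and H is a normal p-subgroup of G. Then there exist r ∈ ℕ and generators h₁, …, h_r of H such that for every 1 ≤ i ≤ r there exists λᵢ ∈ ℤ with g hᵢ g⁻¹ = hᵢ^{λᵢ}. -/

import Mathlib

open Polynomial

lemma injective_list_prod {p : ℕ} {B : Type*} [AddCommGroup B] [Module (ZMod p) B]
    (L : List (Module.End (ZMod p) B)) (h : ∀ T ∈ L, Function.Injective T) :
    Function.Injective (L.prod : Module.End (ZMod p) B) := by
  induction L with
  | nil =>
    intro u v huv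
    simpa [Module.End.one_apply] using huv
  | cons a l ih =>
    rw [List.prod_cons]
    intro u v huv
    rw [Module.End.mul_apply, Module.End.mul_apply] at huv
    exact (ih (fun T hT => h T (List.mem_cons_of_mem _ hT)))
      (h a (List.mem_cons_self (a := a) (l := l)) huv)

lemma eig_exists {p : ℕ} (hp : p.Prime) {B : Type*} [AddCommGroup B] [Module (ZMod p) B]
    [Nontrivial B] (f : B →ₗ[ZMod p] B) (hf : f ^ (p - 1) = 1) :
    ∃ (b : B) (c : (ZMod p)ˣ), b ≠ 0 ∧ f b = (c : ZMod p) • b := by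
  haveI := Fact.mk hp
  set P : Polynomial (ZMod p) := ∏ c : (ZMod p)ˣ, (X - C (c : ZMod p)) with hP
  have hPmonic : P.Monic := monic_prod_of_monic _ _ fun c _ => monic_X_sub_C _
  have hcard : Fintype.card (ZMod p)ˣ = p - 1 := ZMod.card_units p
  have hPdeg : P.natDegree = p - 1 := by
    rw [hP, natDegree_prod_of_monic _ _ fun c _ => monic_X_sub_C _]
    simp [natDegree_X_sub_C, hcard]
  have hQmonic : (X ^ (p - 1) - 1 : (ZMod p)[X]).Monic := by
    have := monic_X_pow_sub_C (R := ZMod p) (1 : ZMod p)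
      (Nat.sub_ne_zero_of_lt hp.one_lt)
    simpa using this
  have hdvd : P ∣ X ^ (p - 1) - 1 := by
    apply Finset.prod_dvd_of_coprime
    · intro c _ d _ hcd
      exact Polynomial.pairwise_coprime_X_sub_C (fun a b hab => Units.ext hab) hcd
    · intro c _
      rw [dvd_iff_isRoot]
      simp [IsRoot.def, ZMod.pow_card_sub_one_eq_one (Units.ne_zero c)]
  have hPQ : (X ^ (p - 1) - 1 : (ZMod p)[X]) = P := by
    apply eq_of_monic_of_dvd_of_natDegree_le hPmonic hQmonic hdvd
    rw [hPdeg]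
    have : (X ^ (p - 1) - (C 1) : (ZMod p)[X]).natDegree = p - 1 :=
      natDegree_X_pow_sub_C
    simp at this
    omega
  have heval : (aeval f) P = 0 := by
    rw [← hPQ]
    simp [map_sub, map_pow, aeval_X, hf]
  set F : (ZMod p)ˣ → (ZMod p)[X] := fun c => X - C (c : ZMod p) with hF
  set L : List (Module.End (ZMod p) B) :=
    (Finset.univ : Finset (ZMod p)ˣ).toList.map ((aeval f) ∘ F) with hL
  have hLprod : L.prod = 0 := by
    rw [hL, ← List.map_map, ← heval, hP, ← Finset.prod_map_toList]
    exact (map_list_prod (aeval f) _).symm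
  have : ¬ Function.Injective (L.prod : Module.End (ZMod p) B) := by
    rw [hLprod]
    intro hinj
    obtain ⟨u, v, huv⟩ := exists_pair_ne B
    exact huv (hinj (by simp))
  have : ∃ T ∈ L, ¬ Function.Injective T := by
    by_contra hc
    push_neg at hc
    exact this (injective_list_prod L hc)
  obtain ⟨T, hTL, hTnotinj⟩ := this
  rw [hL, List.mem_map] at hTL
  obtain ⟨c, _, rfl⟩ := hTL
  rw [Function.not_injective_iff] at hTnotinj
  obtain ⟨u, v, huv, hne⟩ := hTnotinj
  simp only [Function.comp_apply] at huv
  have Tc : ((aeval f) (F c)) = f - algebraMap (ZMod p) (Module.End (ZMod p) B) (c : ZMod p) := by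
    simp [hF, map_sub]
  rw [Tc] at huv
  refine ⟨u - v, c, sub_ne_zero_of_ne hne, ?_⟩
  have h3 : f u - (c : ZMod p) • u = f v - (c : ZMod p) • v := by
    simpa [LinearMap.sub_apply, Module.algebraMap_end_apply] using huv
  rw [map_sub, smul_sub]
  exact sub_eq_sub_iff_sub_eq_sub.mp h3


lemma zpow_eq_of_modeq {G : Type*} [Group G] {x : G} {p : ℕ} (hx : x ^ p = 1)
    {a b : ℤ} (hab : (p : ℤ) ∣ a - b) : x ^ a = x ^ b := by
  obtain ⟨k, hk⟩ := hab
  have ha : a = b + p * k := by linarith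
  rw [ha, zpow_add, zpow_mul, zpow_natCast, hx, one_zpow, mul_one]

lemma lift_eigen {G : Type*} [Group G] {p : ℕ} (hp : p.Prime) {g x h₀ : G}
    (hgp : g ^ (p - 1) = 1) (hx : x ^ p = 1) (hcomm : Commute x h₀)
    {lam : ℤ} (hlam : g * x * g⁻¹ = x ^ lam)
    {mu s : ℤ} (hmu : g * h₀ * g⁻¹ = h₀ ^ mu * x ^ s)
    (hpmu : ¬ (p : ℤ) ∣ mu) :
    ∃ t l : ℤ, g * (h₀ * x ^ t) * g⁻¹ = (h₀ * x ^ t) ^ l := by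
  haveI := Fact.mk hp
  have hp2 : 2 ≤ p := hp.two_le
  have hpint : Prime (p : ℤ) := Nat.prime_iff_prime_int.mp hp
  have hconj : ∀ (y : G) (m : ℤ), g * y ^ m * g⁻¹ = (g * y * g⁻¹) ^ m := fun y m =>
    conj_zpow.symm
  have hsplit : ∀ (a b : G), g * (a * b) * g⁻¹ = (g * a * g⁻¹) * (g * b * g⁻¹) := fun a b => by
    group
  by_cases hs : (p : ℤ) ∣ s
  · refine ⟨0, mu, ?_⟩
    have hxs : x ^ s = x ^ (0 : ℤ) := zpow_eq_of_modeq hx (by simpa using hs)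
    simp only [zpow_zero, mul_one, hmu, hxs]
  by_cases hlm : (p : ℤ) ∣ (lam - mu)
  · -- hard case: x turns out to be a power of h₀
    have hlam' : g * x * g⁻¹ = x ^ mu := hlam.trans (zpow_eq_of_modeq hx hlm)
    set e : ℕ → ℤ := fun k => Nat.rec 0 (fun k ek => s * mu ^ k + mu * ek) k with he
    have he0 : e 0 = 0 := rfl
    have hesucc : ∀ k, e (k + 1) = s * mu ^ k + mu * e k := fun k => rfl
    have hemu : ∀ k : ℕ, e k * mu = s * k * mu ^ k := by
      intro k
      induction k with
      | zero => simp [he0]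
      | succ k ih =>
        rw [hesucc]
        push_cast
        push_cast at ih
        linear_combination mu * ih
    have claim : ∀ k : ℕ, g ^ k * h₀ * (g ^ k)⁻¹ = h₀ ^ (mu ^ k : ℤ) * x ^ (e k) := by
      intro k
      induction k with
      | zero => simp [he0]
      | succ k ih =>
        have h1 : g ^ (k+1) * h₀ * (g ^ (k+1))⁻¹
            = g * (g ^ k * h₀ * (g ^ k)⁻¹) * g⁻¹ := by
          rw [pow_succ']; group
        rw [h1, ih, hsplit, hconj, hconj, hmu, hlam']
        rw [(hcomm.symm.zpow_zpow mu s).mul_zpow]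
        rw [← zpow_mul, ← zpow_mul, ← zpow_mul, mul_assoc, ← zpow_add]
        rw [show mu * (mu ^ k : ℤ) = ((mu ^ (k+1) : ℤ)) by ring,
          show s * mu ^ k + mu * e k = e (k+1) from (hesucc k).symm]
    have hkey : h₀ ^ (1:ℤ) = h₀ ^ (mu ^ (p-1) : ℤ) * x ^ (e (p-1)) := by
      rw [zpow_one, ← claim (p-1), hgp, one_mul, inv_one, mul_one]
    have hxE : x ^ (e (p-1)) = h₀ ^ (1 - mu ^ (p-1) : ℤ) := by
      calc x ^ (e (p-1))
          = h₀ ^ (-(mu ^ (p-1)) : ℤ) * (h₀ ^ (mu ^ (p-1) : ℤ) * x ^ (e (p-1))) := by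
            rw [← mul_assoc, ← zpow_add, neg_add_cancel, zpow_zero, one_mul]
        _ = h₀ ^ (-(mu ^ (p-1)) : ℤ) * h₀ ^ (1:ℤ) := by rw [← hkey]
        _ = h₀ ^ (1 - mu ^ (p-1) : ℤ) := by rw [← zpow_add]; ring_nf
    have hpE : ¬ (p : ℤ) ∣ e (p-1) := by
      intro hdvd
      have h2 : (p : ℤ) ∣ s * ((p - 1 : ℕ) : ℤ) * mu ^ (p - 1) := by
        rw [← hemu (p-1)]
        exact hdvd.mul_right mu
      rcases (hpint.dvd_mul.mp h2) with h3 | h3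
      · rcases hpint.dvd_mul.mp h3 with h4 | h4
        · exact hs h4
        · rw [Int.natCast_dvd_natCast] at h4
          have := Nat.le_of_dvd (by omega) h4
          omega
      · exact hpmu (hpint.dvd_of_dvd_pow h3)
    have hEz : (((e (p-1) : ℤ) : ZMod p) ≠ 0) := fun hc =>
      hpE ((ZMod.intCast_zmod_eq_zero_iff_dvd _ p).mp hc)
    obtain ⟨e', hEe'⟩ : ∃ e' : ℤ, (p : ℤ) ∣ e (p-1) * e' - 1 := by
      refine ⟨((((e (p-1) : ℤ) : ZMod p)⁻¹).val : ℤ), ?_⟩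
      rw [← ZMod.intCast_zmod_eq_zero_iff_dvd]
      push_cast
      rw [ZMod.natCast_val, ZMod.cast_id, mul_inv_cancel₀ hEz, sub_self]
    have hxh : x = h₀ ^ ((1 - mu ^ (p-1)) * e' : ℤ) := by
      calc x = x ^ (1 : ℤ) := (zpow_one x).symm
        _ = x ^ (e (p-1) * e') := (zpow_eq_of_modeq hx hEe').symm
        _ = (x ^ (e (p-1))) ^ e' := by rw [zpow_mul]
        _ = (h₀ ^ (1 - mu ^ (p-1) : ℤ)) ^ e' := by rw [hxE]
        _ = h₀ ^ ((1 - mu ^ (p-1)) * e' : ℤ) := by rw [zpow_mul]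
    refine ⟨0, mu + (1 - mu ^ (p-1)) * e' * s, ?_⟩
    rw [zpow_zero, mul_one, hmu]
    conv_lhs => rw [hxh]
    rw [← zpow_mul, ← zpow_add]
  · -- correction case
    have hne : ((lam : ZMod p) - (mu : ZMod p)) ≠ 0 := by
      intro hc
      apply hlm
      rw [← ZMod.intCast_zmod_eq_zero_iff_dvd]
      push_cast
      exact hc
    obtain ⟨t, hdvd⟩ : ∃ t : ℤ, (p : ℤ) ∣ (t * (lam - mu) + s) := by
      refine ⟨(((-(s : ZMod p)) * ((lam : ZMod p) - (mu : ZMod p))⁻¹).val : ℤ), ?_⟩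
      rw [← ZMod.intCast_zmod_eq_zero_iff_dvd]
      push_cast
      rw [ZMod.natCast_val, ZMod.cast_id]
      rw [mul_assoc, inv_mul_cancel₀ hne, mul_one, neg_add_cancel]
    refine ⟨t, mu, ?_⟩
    rw [hsplit, hconj, hmu, hlam]
    rw [← zpow_mul]
    rw [(hcomm.symm.zpow_right t).mul_zpow]
    rw [← zpow_mul, mul_assoc, ← zpow_add]
    congr 1
    apply zpow_eq_of_modeq hx
    have h5 : s + lam * t - t * mu = t * (lam - mu) + s := by ring
    rw [h5]
    exact hdvd


open IsMulCommutative in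
lemma exists_central_eigen {G : Type*} [Group G] [Finite G] {p : ℕ} (hp : p.Prime)
    (H : Subgroup G) [hN : H.Normal] (hH : IsPGroup p H) (hHnt : H ≠ ⊥)
    (g : G) (hg : g ^ (p - 1) = 1) :
    ∃ x : G, x ∈ H ∧ x ≠ 1 ∧ x ^ p = 1 ∧ (∀ y ∈ H, Commute x y) ∧
      ∃ c : ℤ, g * x * g⁻¹ = x ^ c := by
  haveI := Fact.mk hp
  haveI : NeZero p := ⟨hp.ne_zero⟩
  -- the subgroup of central elements of exponent p in H
  set A : Subgroup G :=
    { carrier := {x | x ∈ H ∧ (∀ y ∈ H, Commute x y) ∧ x ^ p = 1}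
      one_mem' := ⟨H.one_mem, fun y _ => Commute.one_left y, one_pow p⟩
      mul_mem' := by
        rintro a b ⟨haH, hac, hap⟩ ⟨hbH, hbc, hbp⟩
        refine ⟨H.mul_mem haH hbH, fun y hy => (hac y hy).mul_left (hbc y hy), ?_⟩
        rw [(hac b hbH).mul_pow, hap, hbp, one_mul]
      inv_mem' := by
        rintro a ⟨haH, hac, hap⟩
        exact ⟨H.inv_mem haH, fun y hy => (hac y hy).inv_left, by
          rw [inv_pow, hap, inv_one]⟩ } with hA
  have hAmem : ∀ {x : G}, x ∈ A ↔ x ∈ H ∧ (∀ y ∈ H, Commute x y) ∧ x ^ p = 1 := Iff.rfl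
  -- A is nontrivial
  haveI : Nontrivial H := (Subgroup.nontrivial_iff_ne_bot H).mpr hHnt
  haveI : Nontrivial (Subgroup.center ↥H) := hH.center_nontrivial
  obtain ⟨z, hz1⟩ := exists_ne (1 : Subgroup.center ↥H)
  obtain ⟨k, hk⟩ := (IsPGroup.iff_orderOf.mp hH) (z : ↥H)
  have hk1 : k ≠ 0 := by
    intro h
    rw [h, pow_zero, orderOf_eq_one_iff] at hk
    exact hz1 (by ext; exact congrArg Subtype.val hk)
  set w : ↥H := (z : ↥H) ^ (p ^ (k - 1)) with hw
  have hwne : w ≠ 1 := by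
    apply pow_ne_one_of_lt_orderOf (pow_ne_zero _ hp.ne_zero)
    rw [hk]
    exact Nat.pow_lt_pow_right hp.one_lt (by omega)
  have hwp : w ^ p = 1 := by
    have hpk : p ^ (k - 1) * p = p ^ k := by
      rw [← pow_succ]
      congr 1
      omega
    rw [hw, ← pow_mul, hpk, ← hk, pow_orderOf_eq_one]
  have hwc : ∀ y : ↥H, Commute w y := by
    intro y
    have hzy : Commute (z : ↥H) y := ((Subgroup.mem_center_iff.mp z.2) y).symm
    exact hzy.pow_left _
  -- the distinguished element of A
  have hxA : (w : G) ∈ A := by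
    refine hAmem.mpr ⟨w.2, ?_, ?_⟩
    · intro y hy
      have := (hwc ⟨y, hy⟩).eq
      exact congrArg Subtype.val this
    · have := congrArg (Subtype.val) hwp
      push_cast at this
      exact this
  have hxne : (w : G) ≠ 1 := fun hc => hwne (Subtype.ext hc)
  haveI : IsMulCommutative ↥A := ⟨⟨by
    rintro ⟨a, ha⟩ ⟨b, hb⟩
    ext
    exact ((hAmem.mp ha).2.1 b (hAmem.mp hb).1).eq⟩⟩
  haveI : Nontrivial ↥A :=
    ⟨⟨⟨w, hxA⟩, 1, fun hc => hxne (congrArg Subtype.val hc)⟩⟩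
  -- conjugation by g preserves A
  have hconjA : ∀ (a : G), a ∈ A → g * a * g⁻¹ ∈ A := by
    intro a ha
    obtain ⟨haH, hac, hap⟩ := hAmem.mp ha
    refine hAmem.mpr ⟨hN.conj_mem a haH g, ?_, ?_⟩
    · intro y hy
      have hy' : g⁻¹ * y * g ∈ H := by
        have := hN.conj_mem y hy g⁻¹
        simpa using this
      have h1 := (hac _ hy').eq
      show (g * a * g⁻¹) * y = y * (g * a * g⁻¹)
      calc (g * a * g⁻¹) * y = g * (a * (g⁻¹ * y * g)) * g⁻¹ := by group
        _ = g * ((g⁻¹ * y * g) * a) * g⁻¹ := by rw [h1]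
        _ = y * (g * a * g⁻¹) := by group
    · rw [conj_pow, hap]
      group
  set σ : ↥A →* ↥A :=
    { toFun := fun a => ⟨g * (a : G) * g⁻¹, hconjA _ a.2⟩
      map_one' := by ext; simp
      map_mul' := by
        intro a b
        ext
        show g * ((a : G) * (b : G)) * g⁻¹ = (g * a * g⁻¹) * (g * b * g⁻¹)
        group } with hσ
  -- module structure
  haveI : Module (ZMod p) (Additive ↥A) := AddCommGroup.zmodModule (by
    intro b
    apply Additive.toMul.injective
    show (p • b).toMul = (0 : Additive ↥A).toMul
    rw [toMul_nsmul]
    ext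
    show ((b.toMul : ↥A) : G) ^ p = 1
    exact (hAmem.mp (b.toMul).2).2.2)
  set F : Additive ↥A →+ Additive ↥A := MonoidHom.toAdditive σ with hF
  have hcval : ∀ c : ZMod p, ((c.val : ℕ) : ZMod p) = c := by
    intro c
    rw [ZMod.natCast_val, ZMod.cast_id]
  set f : Module.End (ZMod p) (Additive ↥A) :=
    { toFun := F
      map_add' := F.map_add
      map_smul' := by
        intro c b
        simp only [RingHom.id_apply]
        rw [← hcval c, Nat.cast_smul_eq_nsmul, Nat.cast_smul_eq_nsmul, F.map_nsmul] } with hf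
  have hfval : ∀ (n : ℕ) (b : Additive ↥A),
      (((f ^ n) b).toMul : G) = g ^ n * ((b.toMul : ↥A) : G) * (g ^ n)⁻¹ := by
    intro n
    induction n with
    | zero => intro b; simp
    | succ n ih =>
      intro b
      rw [pow_succ, Module.End.mul_apply, ih (f b)]
      have h2 : (((f b).toMul : ↥A) : G) = g * ((b.toMul : ↥A) : G) * g⁻¹ := rfl
      rw [h2, pow_succ' g]
      group
  have hfone : f ^ (p - 1) = 1 := by
    apply LinearMap.ext
    intro b
    have h3 := hfval (p - 1) b
    rw [hg] at h3
    simp only [one_mul, inv_one, mul_one] at h3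
    show ((f ^ (p-1)) b) = b
    apply Additive.toMul.injective
    ext
    exact h3
  obtain ⟨b, c, hbne, heig⟩ := eig_exists hp f hfone
  refine ⟨((b.toMul : ↥A) : G), (hAmem.mp (b.toMul).2).1, ?_, (hAmem.mp (b.toMul).2).2.2,
    (hAmem.mp (b.toMul).2).2.1, ⟨(((c : ZMod p).val : ℕ) : ℤ), ?_⟩⟩
  · intro hc
    apply hbne
    apply Additive.toMul.injective
    exact Subtype.ext hc
  · have h4 : (((f b).toMul : ↥A) : G) = g * ((b.toMul : ↥A) : G) * g⁻¹ := rfl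
    rw [heig] at h4
    have h5 : ((c : ZMod p) • b) = ((c : ZMod p).val : ℕ) • b := by
      rw [← hcval (c : ZMod p), Nat.cast_smul_eq_nsmul, hcval]
    rw [h5] at h4
    rw [toMul_nsmul] at h4
    have h6 : (((b.toMul ^ (c : ZMod p).val : ↥A)) : G)
        = ((b.toMul : ↥A) : G) ^ (c : ZMod p).val := rfl
    rw [h6] at h4
    rw [zpow_natCast]
    exact h4.symm

universe u

theorem aux (n : ℕ) : ∀ {G : Type u} [Group G] [Finite G] (p : ℕ), p.Prime →
    ∀ (H : Subgroup G) (_ : H.Normal), IsPGroup p H → ∀ (g : G), orderOf g ∣ p - 1 →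
    Subgroup.closure ({g} ∪ (H : Set G)) = ⊤ → Nat.card H ≤ n →
    ∃ (r : ℕ) (h : Fin r → G), (∀ i, h i ∈ H) ∧
      Subgroup.closure (Set.range h) = H ∧
      ∀ i, ∃ l : ℤ, g * h i * g⁻¹ = (h i) ^ l := by
  induction n using Nat.strong_induction_on with
  | _ n IH =>
  intro G _ _ p hp H hHnorm hH g hg hgen hcard
  haveI := Fact.mk hp
  by_cases hbot : H = ⊥
  · refine ⟨0, Fin.elim0, fun i => i.elim0, ?_, fun i => i.elim0⟩
    rw [Set.range_eq_empty, Subgroup.closure_empty, hbot]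
  have hgp : g ^ (p - 1) = 1 := orderOf_dvd_iff_pow_eq_one.mp hg
  obtain ⟨x, hxH, hxne, hxp, hxc, lam, hlam⟩ := exists_central_eigen hp H hH hbot g hgp
  set N : Subgroup G := Subgroup.zpowers x with hNdef
  have hNleH : N ≤ H := Subgroup.zpowers_le.mpr hxH
  have hxN : x ∈ N := Subgroup.mem_zpowers x
  -- N is normal in G
  haveI hNnormal : N.Normal := by
    rw [← Subgroup.normalizer_eq_top_iff, ← top_le_iff, ← hgen, Subgroup.closure_le]
    rintro y (rfl | hyH)
    · apply Subgroup.mem_normalizer_fintype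
      intro m hm
      obtain ⟨k, rfl⟩ := Subgroup.mem_zpowers_iff.mp hm
      have : y * x ^ k * y⁻¹ = (y * x * y⁻¹) ^ k := conj_zpow.symm
      rw [this, hlam, ← zpow_mul]
      exact Subgroup.zpow_mem _ (Subgroup.mem_zpowers x) _
    · apply Subgroup.mem_normalizer_fintype
      intro m hm
      obtain ⟨k, rfl⟩ := Subgroup.mem_zpowers_iff.mp hm
      have h1 : y * x ^ k * y⁻¹ = (y * x * y⁻¹) ^ k := conj_zpow.symm
      have h2 : y * x * y⁻¹ = x := by
        have := (hxc y hyH).eq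
        rw [← this]
        group
      rw [h1, h2]
      exact Subgroup.zpow_mem _ (Subgroup.mem_zpowers x) _
  set π := QuotientGroup.mk' N with hπ
  have hπsurj : Function.Surjective π := QuotientGroup.mk'_surjective N
  have hπker : ∀ z : G, π z = 1 ↔ z ∈ N := fun z => QuotientGroup.eq_one_iff z
  set H' : Subgroup (G ⧸ N) := H.map π with hH'def
  haveI : H'.Normal := Subgroup.Normal.map hHnorm π hπsurj
  have hH' : IsPGroup p H' := hH.map π
  have hg' : orderOf (π g) ∣ p - 1 := (orderOf_map_dvd π g).trans hg
  have hgen' : Subgroup.closure ({π g} ∪ (H' : Set (G ⧸ N))) = ⊤ := by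
    have h0 := congrArg (Subgroup.map π) hgen
    rw [MonoidHom.map_closure, Set.image_union, Set.image_singleton,
      Subgroup.map_top_of_surjective π hπsurj] at h0
    rw [← h0]
    rfl
  -- cardinality decreases
  have hcard' : Nat.card H' < Nat.card H := by
    set φ := π.subgroupMap H with hφ
    have hφsurj : Function.Surjective φ := π.subgroupMap_surjective H
    have h1 : Nat.card ↥H = Nat.card (↥H ⧸ φ.ker) * Nat.card φ.ker :=
      Subgroup.card_eq_card_quotient_mul_card_subgroup φ.ker
    have h2 : Nat.card (↥H ⧸ φ.ker) = Nat.card H' :=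
      Nat.card_congr (QuotientGroup.quotientKerEquivOfSurjective φ hφsurj).toEquiv
    have h3 : 1 < Nat.card φ.ker := by
      rw [Finite.one_lt_card_iff_nontrivial]
      refine ⟨⟨⟨x, hxH⟩, ?_⟩, 1, ?_⟩
      · rw [MonoidHom.mem_ker]
        ext
        show π x = 1  -- φ ⟨x⟩ val = π x
        exact (hπker x).mpr hxN
      · intro hc
        exact hxne (by simpa using congrArg (fun a : φ.ker => ((a : ↥H) : G)) hc)
    have h4 : 0 < Nat.card H' := Nat.card_pos
    rw [h2] at h1
    nlinarith
  -- apply induction hypothesis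
  obtain ⟨r, h', hh'H, hh'gen, hh'eig⟩ :=
    IH (Nat.card H') (lt_of_lt_of_le hcard' hcard) p hp H' ‹H'.Normal› hH' (π g) hg' hgen'
      le_rfl
  -- lift the generators
  have hlift : ∀ i : Fin r, ∃ y : G, y ∈ H ∧ π y = h' i ∧ ∃ l : ℤ, g * y * g⁻¹ = y ^ l := by
    intro i
    by_cases htriv : h' i = 1
    · exact ⟨1, H.one_mem, by rw [map_one, htriv], 1, by simp⟩
    obtain ⟨h₀, hh₀H, hh₀π⟩ := Subgroup.mem_map.mp (hh'H i)
    obtain ⟨mu, hmu'⟩ := hh'eig i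
    have hcomm : Commute x h₀ := hxc h₀ hh₀H
    have hker : g * h₀ * g⁻¹ * h₀ ^ (-mu) ∈ N := by
      rw [← hπker]
      simp only [map_mul, map_inv, map_zpow]
      rw [hh₀π, hmu', ← zpow_add, add_neg_cancel, zpow_zero]
    obtain ⟨s, hs⟩ := Subgroup.mem_zpowers_iff.mp hker
    have hmu2 : g * h₀ * g⁻¹ = h₀ ^ mu * x ^ s := by
      have h5 : g * h₀ * g⁻¹ = x ^ s * h₀ ^ mu := by
        rw [hs]
        group
      rw [h5, ((hcomm.zpow_zpow s mu).symm).eq]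
    have hpmu : ¬ (p : ℤ) ∣ mu := by
      intro hdvd
      obtain ⟨m, rfl⟩ := hdvd
      obtain ⟨k, hk⟩ := IsPGroup.iff_orderOf.mp hH' ⟨h' i, hh'H i⟩
      have hk' : orderOf (h' i) = p ^ k := by
        rw [← Subgroup.orderOf_coe (⟨h' i, hh'H i⟩ : ↥H')] at hk
        exact hk
      have hkpos : k ≠ 0 := by
        intro hc
        rw [hc, pow_zero, orderOf_eq_one_iff] at hk'
        exact htriv hk'
      -- conjugate has the same order
      have hsemi : SemiconjBy (π g) (h' i) (π g * h' i * (π g)⁻¹) := by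
        unfold SemiconjBy
        group
      have hord : orderOf (h' i) = orderOf (π g * h' i * (π g)⁻¹) := hsemi.orderOf_eq _
      rw [hmu'] at hord
      have hsmall : ((h' i) ^ ((p : ℤ) * m)) ^ ((p : ℕ) ^ (k - 1)) = 1 := by
        rw [← zpow_natCast ((h' i) ^ ((p:ℤ) * m)) (p ^ (k-1)), ← zpow_mul]
        have : (p : ℤ) * m * ((p : ℕ) ^ (k - 1) : ℕ) = (p ^ k : ℕ) * m := by
          push_cast
          rw [show (p:ℤ) * m * (p:ℤ) ^ (k-1) = ((p:ℤ) * (p:ℤ) ^ (k-1)) * m by ring]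
          congr 1
          rw [← pow_succ']
          congr 1
          omega
        rw [this, zpow_mul, zpow_natCast, ← hk', pow_orderOf_eq_one, one_zpow]
      have hdvd2 : orderOf ((h' i) ^ ((p : ℤ) * m)) ∣ p ^ (k - 1) :=
        orderOf_dvd_of_pow_eq_one hsmall
      rw [← hord, hk'] at hdvd2
      have := Nat.le_of_dvd (pow_pos hp.pos _) hdvd2
      have := Nat.pow_lt_pow_right hp.one_lt (show k - 1 < k by omega)
      omega
    obtain ⟨t, l, hliftt⟩ := lift_eigen hp hgp hxp hcomm hlam hmu2 hpmu
    refine ⟨h₀ * x ^ t, H.mul_mem hh₀H (H.zpow_mem hxH t), ?_, l, hliftt⟩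
    rw [map_mul, hh₀π]
    have : π (x ^ t) = 1 := by
      rw [hπker]
      exact Subgroup.zpow_mem _ hxN t
    rw [this, mul_one]
  choose y hyH hyπ hyeig using hlift
  refine ⟨r + 1, Fin.cons x y, ?_, ?_, ?_⟩
  · intro i
    refine Fin.cases ?_ ?_ i
    · rw [Fin.cons_zero]; exact hxH
    · intro j; rw [Fin.cons_succ]; exact hyH j
  · apply le_antisymm
    · rw [Subgroup.closure_le]
      rintro z ⟨i, rfl⟩
      refine Fin.cases ?_ ?_ i
      · rw [Fin.cons_zero]; exact hxH
      · intro j; rw [Fin.cons_succ]; exact hyH j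
    · intro z hz
      set K := Subgroup.closure (Set.range (Fin.cons x y : Fin (r+1) → G)) with hK
      have hxK : x ∈ K := Subgroup.subset_closure ⟨0, by simp⟩
      have hyK : ∀ j, y j ∈ K := fun j => Subgroup.subset_closure ⟨j.succ, by simp⟩
      have hπz : π z ∈ Subgroup.map π K := by
        have h6 : π z ∈ H' := Subgroup.mem_map_of_mem π hz
        rw [← hh'gen] at h6
        refine (Subgroup.closure_le _).mpr ?_ h6
        rintro w ⟨j, rfl⟩
        rw [← hyπ j]
        exact Subgroup.mem_map_of_mem π (hyK j)
      obtain ⟨kz, hkzK, hkz⟩ := Subgroup.mem_map.mp hπz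
      have h7 : kz⁻¹ * z ∈ N := by
        rw [← hπker]
        rw [map_mul, map_inv, hkz]
        simp
      have h8 : kz⁻¹ * z ∈ K := Subgroup.zpowers_le.mpr hxK h7
      have := K.mul_mem hkzK h8
      simpa using this
  · intro i
    refine Fin.cases ?_ ?_ i
    · exact ⟨lam, by rw [Fin.cons_zero]; exact hlam⟩
    · intro j
      obtain ⟨l, hl⟩ := hyeig j
      exact ⟨l, by rw [Fin.cons_succ]; exact hl⟩


theorem stmt_0 {G : Type*} [Group G] [Finite G] (p : ℕ) (hp : p.Prime)
    (H : Subgroup G) [H.Normal] (hH : IsPGroup p H)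
    (g : G) (hg : orderOf g ∣ p - 1)
    (hgen : Subgroup.closure ({g} ∪ (H : Set G)) = ⊤) :
    ∃ (r : ℕ) (h : Fin r → G), (∀ i, h i ∈ H) ∧
      Subgroup.closure (Set.range h) = H ∧
      ∀ i, ∃ l : ℤ, g * h i * g⁻¹ = (h i) ^ l :=
  aux (Nat.card H) p hp H ‹H.Normal› hH g hg hgen le_rfl
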